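/- arXiv:2409.03237 — 2 statements merged into one kernel-verified Lean document; each statement's English description precedes it below -/
import Mathlib

section
/- For the five-state example MDP under the Huber attack with attack signal C = ((2−ε)d + κ)/ε, any fixed point Q* of the clean Bellman operator T* and any fixed point Q̃*_c of the perturbed Bellman operator T̃*_c satisfy ‖Q̃*_c − Q*‖∞ = 2d + κ; in particular, since κ > 0 can be chosen arbitrarily large by the attacker, the gap ‖Q̃*_c − Q*‖∞ can be made arbitrarily large. -/
open Finset

/-- The two actions `L` and `R`. -/
inductive Act : Type
  | L : Act
  | R : Act
  deriving DecidableEq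

instance : Fintype Act := ⟨{Act.L, Act.R}, fun x => by cases x <;> simp⟩

instance : Nonempty Act := ⟨Act.L⟩

/-- Transition kernel of the five-state example MDP; state `i+1` of the paper
is encoded as `(i : Fin 5)`.  From state 1, action `L` leads to state 2 w.p. `p`
and to state 5 w.p. `1-p`; action `R` leads to state 3 w.p. `p` and to
state 4 w.p. `1-p`.  State 2 stays w.p. `p` and moves to state 5 w.p. `1-p`;
state 3 stays w.p. `p` and moves to state 4 w.p. `1-p`; states 4 and 5 are
absorbing. -/
def P5 (p : ℝ) : Fin 5 → Act → Fin 5 → ℝ := fun s a s' =>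
  if s = 0 then
    (match a with
      | Act.L => if s' = 1 then p else if s' = 4 then 1 - p else 0
      | Act.R => if s' = 2 then p else if s' = 3 then 1 - p else 0)
  else if s = 1 then (if s' = 1 then p else if s' = 4 then 1 - p else 0)
  else if s = 2 then (if s' = 2 then p else if s' = 3 then 1 - p else 0)
  else if s = 3 then (if s' = 3 then 1 else 0)
  else (if s' = 4 then 1 else 0)

/-- Clean expected rewards of the five-state example MDP: `R(1,L)=d`,
`R(1,R)=-d`, reward `1` in states 2 and 3, reward `0` in states 4 and 5. -/
def R5 (d : ℝ) : Fin 5 → Act → ℝ := fun s a =>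
  if s = 0 then (match a with | Act.L => d | Act.R => -d)
  else if s = 1 ∨ s = 2 then 1
  else 0

/-- Bellman optimality operator
`(T*Q)(s,a) = R(s,a) + γ Σ_{s'} P(s'|s,a) max_{a'} Q(s',a')`. -/
noncomputable def bellman (P : Fin 5 → Act → Fin 5 → ℝ) (R : Fin 5 → Act → ℝ) (γ : ℝ)
    (Q : Fin 5 → Act → ℝ) : Fin 5 → Act → ℝ :=
  fun s a =>
    R s a + γ * ∑ s', P s a s' * Finset.univ.sup' Finset.univ_nonempty (fun a' => Q s' a')

/-- Perturbed expected rewards under the Huber attack with corruption fraction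
`ε` and attack signal `C`: `R̃(1,L) = (1-ε)d - εC`, `R̃(1,R) = -(1-ε)d + εC`,
and `R̃(s,a) = R(s,a)` for `s ≠ 1`. -/
def R5c (d ε C : ℝ) : Fin 5 → Act → ℝ := fun s a =>
  if s = 0 then (match a with
    | Act.L => (1 - ε) * d - ε * C
    | Act.R => -((1 - ε) * d) + ε * C)
  else R5 d s a

/-- Sup norm `‖Q‖∞ = max_{(s,a)} |Q(s,a)|`. -/
noncomputable def supNorm (Q : Fin 5 → Act → ℝ) : ℝ :=
  Finset.univ.sup' Finset.univ_nonempty (fun q : Fin 5 × Act => |Q q.1 q.2|)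


lemma sup'_act (f : Act → ℝ) :
    Finset.univ.sup' Finset.univ_nonempty f = max (f Act.L) (f Act.R) := by
  have huniv : (Finset.univ : Finset Act) = {Act.L, Act.R} := by decide
  rw [Finset.sup'_congr Finset.univ_nonempty huniv (fun _ _ => rfl)]
  simp [Finset.sup'_insert]

lemma vals (γ p : ℝ) (hγ0 : 0 < γ) (hγ1 : γ < 1) (hp0 : 0 ≤ p) (hp1 : p ≤ 1)
    (R : Fin 5 → Act → ℝ)
    (hR1 : ∀ a, R 1 a = 1) (hR2 : ∀ a, R 2 a = 1)
    (hR3 : ∀ a, R 3 a = 0) (hR4 : ∀ a, R 4 a = 0)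
    (Q : Fin 5 → Act → ℝ) (hQ : bellman (P5 p) R γ Q = Q) :
    (∀ a, Q 1 a = 1/(1-γ*p)) ∧ (∀ a, Q 2 a = 1/(1-γ*p)) ∧
    (∀ a, Q 3 a = 0) ∧ (∀ a, Q 4 a = 0) ∧
    (∀ a, Q 0 a = R 0 a + γ*(p/(1-γ*p))) := by
  have hgp : γ * p < 1 := by nlinarith
  have hne : (1 : ℝ) - γ * p ≠ 0 := by intro h; nlinarith
  have h := fun s a => (congrFun (congrFun hQ s) a).symm
  -- state 4
  have h4L := h 4 Act.L; have h4R := h 4 Act.R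
  simp [bellman, P5, Fin.sum_univ_five, sup'_act, hR4] at h4L h4R
  have e4 : Q 4 Act.L = Q 4 Act.R := h4L.trans h4R.symm
  rw [← e4, sup_idem] at h4L
  have z4 : Q 4 Act.L * (1 - γ) = 0 := by linear_combination h4L
  have hq4L : Q 4 Act.L = 0 := by
    rcases mul_eq_zero.mp z4 with h' | h'
    · exact h'
    · exfalso; linarith
  have hq4R : Q 4 Act.R = 0 := by rw [← e4]; exact hq4L
  -- state 3
  have h3L := h 3 Act.L; have h3R := h 3 Act.R
  simp [bellman, P5, Fin.sum_univ_five, sup'_act, hR3] at h3L h3R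
  have e3 : Q 3 Act.L = Q 3 Act.R := h3L.trans h3R.symm
  rw [← e3, sup_idem] at h3L
  have z3 : Q 3 Act.L * (1 - γ) = 0 := by linear_combination h3L
  have hq3L : Q 3 Act.L = 0 := by
    rcases mul_eq_zero.mp z3 with h' | h'
    · exact h'
    · exfalso; linarith
  have hq3R : Q 3 Act.R = 0 := by rw [← e3]; exact hq3L
  -- state 2
  have h2L := h 2 Act.L; have h2R := h 2 Act.R
  simp [bellman, P5, Fin.sum_univ_five, sup'_act, hR2, hq3L, hq3R] at h2L h2R
  have e2 : Q 2 Act.L = Q 2 Act.R := h2L.trans h2R.symm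
  rw [← e2, sup_idem] at h2L
  have hq2L : Q 2 Act.L = 1/(1-γ*p) := by
    field_simp
    linear_combination h2L
  have hq2R : Q 2 Act.R = 1/(1-γ*p) := by rw [← e2]; exact hq2L
  -- state 1
  have h1L := h 1 Act.L; have h1R := h 1 Act.R
  simp [bellman, P5, Fin.sum_univ_five, sup'_act, hR1, hq4L, hq4R] at h1L h1R
  have e1 : Q 1 Act.L = Q 1 Act.R := h1L.trans h1R.symm
  rw [← e1, sup_idem] at h1L
  have hq1L : Q 1 Act.L = 1/(1-γ*p) := by
    field_simp
    linear_combination h1L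
  have hq1R : Q 1 Act.R = 1/(1-γ*p) := by rw [← e1]; exact hq1L
  -- state 0
  have h0L := h 0 Act.L; have h0R := h 0 Act.R
  simp [bellman, P5, Fin.sum_univ_five, sup'_act, hq1L, hq1R, hq2L, hq2R,
    hq3L, hq3R, hq4L, hq4R] at h0L h0R
  refine ⟨fun a => ?_, fun a => ?_, fun a => ?_, fun a => ?_, fun a => ?_⟩ <;>
    cases a <;>
    first
      | exact hq1L | exact hq1R | exact hq2L | exact hq2R
      | exact hq3L | exact hq3R | exact hq4L | exact hq4R
      | (rw [h0L]; ring) | (rw [h0R]; ring)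

/-- For the five-state example MDP under the Huber attack with attack signal
`C = ((2-ε)d + κ)/ε`, any fixed point `Q*` of the clean Bellman operator and
any fixed point `Q̃*_c` of the perturbed Bellman operator satisfy
`‖Q̃*_c - Q*‖∞ = 2d + κ`; since `κ > 0` is arbitrary, the gap can be made
arbitrarily large. -/
theorem example_mdp_corrupted_gap (γ p d ε κ : ℝ)
    (hγ : γ ∈ Set.Ioo (0 : ℝ) 1) (hp : p ∈ Set.Icc (0 : ℝ) 1) (hd : 0 < d)
    (hε : ε ∈ Set.Ioo (0 : ℝ) 1) (hκ : 0 < κ)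
    (Qstar Qc : Fin 5 → Act → ℝ)
    (hQ : bellman (P5 p) (R5 d) γ Qstar = Qstar)
    (hQc : bellman (P5 p) (R5c d ε (((2 - ε) * d + κ) / ε)) γ Qc = Qc) :
    supNorm (fun s a => Qc s a - Qstar s a) = 2 * d + κ := by
  obtain ⟨hγ0, hγ1⟩ := hγ
  obtain ⟨hp0, hp1⟩ := hp
  obtain ⟨hε0, hε1⟩ := hε
  obtain ⟨hs1, hs2, hs3, hs4, hs0⟩ :=
    vals γ p hγ0 hγ1 hp0 hp1 (R5 d) (fun a => by simp [R5]) (fun a => by simp [R5])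
      (fun a => by simp [R5]) (fun a => by simp [R5]) Qstar hQ
  obtain ⟨hc1, hc2, hc3, hc4, hc0⟩ :=
    vals γ p hγ0 hγ1 hp0 hp1 (R5c d ε (((2 - ε) * d + κ) / ε))
      (fun a => by simp [R5c, R5]) (fun a => by simp [R5c, R5])
      (fun a => by simp [R5c, R5]) (fun a => by simp [R5c, R5]) Qc hQc
  have hεne : ε ≠ 0 := ne_of_gt hε0
  have dL : Qc 0 Act.L - Qstar 0 Act.L = -(2 * d + κ) := by
    rw [hc0, hs0]
    simp only [R5c, R5]
    norm_num
    field_simp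
    ring
  have dR : Qc 0 Act.R - Qstar 0 Act.R = 2 * d + κ := by
    rw [hc0, hs0]
    simp only [R5c, R5]
    norm_num
    field_simp
    ring
  have hpos : 0 < 2 * d + κ := by linarith
  have key : ∀ s a, |Qc s a - Qstar s a| ≤ 2 * d + κ := by
    intro s a
    match s, a with
    | 0, Act.L => rw [dL, abs_neg, abs_of_pos hpos]
    | 0, Act.R => rw [dR, abs_of_pos hpos]
    | 1, a => rw [hs1, hc1, sub_self, abs_zero]; linarith
    | 2, a => rw [hs2, hc2, sub_self, abs_zero]; linarith
    | 3, a => rw [hs3, hc3, sub_self, abs_zero]; linarith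
    | 4, a => rw [hs4, hc4, sub_self, abs_zero]; linarith
  unfold supNorm
  apply le_antisymm
  · exact Finset.sup'_le _ _ (fun q _ => key q.1 q.2)
  · have hle := Finset.le_sup'
      (fun q : Fin 5 × Act => |(fun s a => Qc s a - Qstar s a) q.1 q.2|)
      (Finset.mem_univ ((0 : Fin 5), Act.R))
    dsimp only at hle
    rw [dR, abs_of_pos hpos] at hle
    exact hle
end

section
/- (Recursion lemma) Let α ∈ (0,1), γ ∈ (0,1), W ≥ 0, and let (d_t)_{t≥0} be a sequence of nonnegative reals satisfying, for every t ≥ 0, d_{t+1} ≤ (1−α)^{t+1} d_0 + γ·α·Σ_{k=0}^{t} (1−α)^{t−k} d_k + W. Then for every t ≥ 0, d_t ≤ (1 − α(1−γ))^{t} d_0 + W/(1−γ). -/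
open Finset

private lemma sumA (α γ : ℝ) : ∀ n : ℕ,
    (1 - α) ^ (n + 1) + γ * α * ∑ k ∈ Finset.range (n + 1),
      (1 - α) ^ (n - k) * (1 - α * (1 - γ)) ^ k = (1 - α * (1 - γ)) ^ (n + 1) := by
  intro n
  induction n with
  | zero => simp; ring
  | succ n ih =>
    have hre : ∑ k ∈ Finset.range (n + 1), (1 - α) ^ (n + 1 - k) * (1 - α * (1 - γ)) ^ k
        = (1 - α) * ∑ k ∈ Finset.range (n + 1), (1 - α) ^ (n - k) * (1 - α * (1 - γ)) ^ k := by
      rw [Finset.mul_sum]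
      apply Finset.sum_congr rfl
      intro k hk
      have hk' : k ≤ n := Nat.lt_succ_iff.mp (Finset.mem_range.mp hk)
      rw [show n + 1 - k = (n - k) + 1 by omega, pow_succ]
      ring
    rw [Finset.sum_range_succ, hre]
    have : (1 - α) ^ (n + 1 + 1) + γ * α *
        ((1 - α) * ∑ k ∈ Finset.range (n + 1), (1 - α) ^ (n - k) * (1 - α * (1 - γ)) ^ k
          + (1 - α) ^ (n + 1 - (n + 1)) * (1 - α * (1 - γ)) ^ (n + 1))
        = (1 - α) * ((1 - α) ^ (n + 1) + γ * α * ∑ k ∈ Finset.range (n + 1),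
            (1 - α) ^ (n - k) * (1 - α * (1 - γ)) ^ k)
          + γ * α * (1 - α * (1 - γ)) ^ (n + 1) := by
      simp only [Nat.sub_self, pow_zero, one_mul]; ring
    rw [this, ih, pow_succ]
    ring

private lemma sumB (α : ℝ) : ∀ n : ℕ,
    α * ∑ k ∈ Finset.range (n + 1), (1 - α) ^ (n - k) = 1 - (1 - α) ^ (n + 1) := by
  intro n
  induction n with
  | zero => simp
  | succ n ih =>
    have hre : ∑ k ∈ Finset.range (n + 1), (1 - α) ^ (n + 1 - k)
        = (1 - α) * ∑ k ∈ Finset.range (n + 1), (1 - α) ^ (n - k) := by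
      rw [Finset.mul_sum]
      apply Finset.sum_congr rfl
      intro k hk
      have hk' : k ≤ n := Nat.lt_succ_iff.mp (Finset.mem_range.mp hk)
      rw [show n + 1 - k = (n - k) + 1 by omega, pow_succ]
      ring
    rw [Finset.sum_range_succ, hre]
    have h2 : α * ((1 - α) * ∑ k ∈ Finset.range (n + 1), (1 - α) ^ (n - k)
        + (1 - α) ^ (n + 1 - (n + 1)))
        = (1 - α) * (α * ∑ k ∈ Finset.range (n + 1), (1 - α) ^ (n - k)) + α := by
      simp only [Nat.sub_self, pow_zero]; ring
    rw [h2, ih, pow_succ]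
    ring

/-- (Recursion lemma)  If a nonnegative sequence satisfies
`d_{t+1} ≤ (1-α)^{t+1} d_0 + γ·α·Σ_{k=0}^{t} (1-α)^{t-k} d_k + W`
for every `t ≥ 0`, then `d_t ≤ (1 - α(1-γ))^t d_0 + W/(1-γ)` for every `t`. -/
theorem recursion_lemma (α γ W : ℝ) (hα : α ∈ Set.Ioo (0 : ℝ) 1)
    (hγ : γ ∈ Set.Ioo (0 : ℝ) 1) (hW : 0 ≤ W)
    (d : ℕ → ℝ) (hd : ∀ t, 0 ≤ d t)
    (hrec : ∀ t, d (t + 1) ≤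
      (1 - α) ^ (t + 1) * d 0 + γ * α * ∑ k ∈ Finset.range (t + 1), (1 - α) ^ (t - k) * d k + W) :
    ∀ t, d t ≤ (1 - α * (1 - γ)) ^ t * d 0 + W / (1 - γ) := by
  obtain ⟨hα0, hα1⟩ := hα
  obtain ⟨hγ0, hγ1⟩ := hγ
  have h1γ : 0 < 1 - γ := by linarith
  have h1α : (0:ℝ) ≤ 1 - α := by linarith
  have hWg : 0 ≤ W / (1 - γ) := div_nonneg hW h1γ.le
  intro t
  induction t using Nat.strong_induction_on with
  | _ t ih =>
    match t with
    | 0 => simp only [pow_zero, one_mul]; linarith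
    | (n + 1) =>
      have hsum : ∑ k ∈ Finset.range (n + 1), (1 - α) ^ (n - k) * d k ≤
          ∑ k ∈ Finset.range (n + 1),
            (1 - α) ^ (n - k) * ((1 - α * (1 - γ)) ^ k * d 0 + W / (1 - γ)) := by
        apply Finset.sum_le_sum
        intro k hk
        exact mul_le_mul_of_nonneg_left (ih k (Finset.mem_range.mp hk)) (pow_nonneg h1α _)
      have hsplit : ∑ k ∈ Finset.range (n + 1),
            (1 - α) ^ (n - k) * ((1 - α * (1 - γ)) ^ k * d 0 + W / (1 - γ))
          = (∑ k ∈ Finset.range (n + 1), (1 - α) ^ (n - k) * (1 - α * (1 - γ)) ^ k) * d 0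
            + (∑ k ∈ Finset.range (n + 1), (1 - α) ^ (n - k)) * (W / (1 - γ)) := by
        simp only [mul_add, ← mul_assoc]
        rw [Finset.sum_add_distrib, ← Finset.sum_mul, ← Finset.sum_mul]
      have hA := sumA α γ n
      have hB := sumB α n
      have hpow : (0:ℝ) ≤ (1 - α) ^ (n + 1) := pow_nonneg h1α _
      have h1 := hrec n
      have hgα : 0 ≤ γ * α := by positivity
      have h2 : γ * α * ∑ k ∈ Finset.range (n + 1), (1 - α) ^ (n - k) * d k ≤
          γ * α * ((∑ k ∈ Finset.range (n + 1), (1 - α) ^ (n - k) * (1 - α * (1 - γ)) ^ k) * d 0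
            + (∑ k ∈ Finset.range (n + 1), (1 - α) ^ (n - k)) * (W / (1 - γ))) := by
        rw [← hsplit]
        exact mul_le_mul_of_nonneg_left hsum hgα
      have hfin : W / (1 - γ) * γ + W = W / (1 - γ) := by
        field_simp
        ring
      nlinarith [hd 0, mul_nonneg hWg hpow, mul_nonneg (hd 0) hpow]
end
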